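/- For real c > 0 and integers q ≥ 2, k ≥ 3, the expected number of labelled copies of configurations on ℓ vertices containing two intersecting loose cycles in a random k-uniform multihypergraph with cn edges is O(1/n); concretely, C(n,ℓ)·(cn·C(ℓ,k)/C(n,k))^{(ℓ+1)/(k−1)} = O(1/n) for each fixed ℓ ≥ k. -/

import Mathlib

open Filter

theorem stmt_19 (q k ℓ : ℕ) (hq : 2 ≤ q) (hk : 3 ≤ k) (hℓ : k ≤ ℓ)
    (c : ℝ) (hc : 0 < c) :
    (fun n : ℕ =>
        (n.choose ℓ : ℝ) *
          (c * n * (ℓ.choose k : ℝ) / (n.choose k : ℝ)) ^ (((ℓ : ℝ) + 1) / ((k : ℝ) - 1)))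
      =O[atTop] (fun n : ℕ => 1 / (n : ℝ)) := by
  have hk1 : (0:ℝ) < (k:ℝ) - 1 := by
    have : (3:ℝ) ≤ (k:ℝ) := by exact_mod_cast hk
    linarith
  set e : ℝ := ((ℓ:ℝ) + 1) / ((k:ℝ) - 1) with he
  have he0 : 0 ≤ e := by positivity
  have hch : (0:ℝ) < (ℓ.choose k : ℝ) := by exact_mod_cast Nat.choose_pos hℓ
  have hfac : (0:ℝ) < (k.factorial : ℝ) := by exact_mod_cast k.factorial_pos
  set A : ℝ := c * (ℓ.choose k : ℝ) * (k.factorial : ℝ) * 2 ^ k with hAdef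
  have hA0 : 0 < A := by
    apply mul_pos (mul_pos (mul_pos hc hch) hfac)
    positivity
  rw [Asymptotics.isBigO_iff]
  refine ⟨A ^ e, ?_⟩
  filter_upwards [eventually_ge_atTop (2 * k + 1)] with n hn
  have hn1 : 1 ≤ n := le_trans (by omega) hn
  have hnpos : (0:ℝ) < (n:ℝ) := by exact_mod_cast hn1
  -- base bound
  have hbase0 : 0 ≤ c * n * (ℓ.choose k : ℝ) / (n.choose k : ℝ) := by positivity
  have hchoose_lb : ((n:ℝ)/2) ^ k / (k.factorial : ℝ) ≤ (n.choose k : ℝ) := by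
    refine le_trans ?_ (Nat.pow_le_choose k n)
    have hle : (n:ℝ)/2 ≤ ((n + 1 - k : ℕ) : ℝ) := by
      have h2 : ((n + 1 - k : ℕ) : ℝ) = (n:ℝ) + 1 - (k:ℝ) := by
        have : k ≤ n + 1 := by omega
        push_cast [this]; ring
      rw [h2]
      have : (k:ℝ) ≤ (n:ℝ) / 2 := by
        have hkn : 2 * k ≤ n := by omega
        have : (2:ℝ) * k ≤ n := by exact_mod_cast hkn
        linarith
      linarith
    gcongr
  have hchoose_lb_pos : (0:ℝ) < ((n:ℝ)/2) ^ k / (k.factorial : ℝ) := by positivity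
  have hbase_le : c * n * (ℓ.choose k : ℝ) / (n.choose k : ℝ) ≤ A * (n:ℝ) ^ ((1:ℝ) - k) := by
    have h1 : c * n * (ℓ.choose k : ℝ) / (n.choose k : ℝ)
        ≤ c * n * (ℓ.choose k : ℝ) / (((n:ℝ)/2) ^ k / (k.factorial : ℝ)) := by
      gcongr
    refine h1.trans ?_
    have hrw : (n:ℝ) ^ ((1:ℝ) - (k:ℝ)) = (n:ℝ) / (n:ℝ) ^ k := by
      rw [sub_eq_add_neg, Real.rpow_add hnpos, Real.rpow_one, Real.rpow_neg hnpos.le,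
        Real.rpow_natCast, div_eq_mul_inv]
    rw [hrw, hAdef]
    rw [div_le_iff₀ (by positivity)]
    apply le_of_eq
    have hnk : ((n:ℝ))^k ≠ 0 := by positivity
    field_simp
    ring_nf
    rw [mul_assoc, ← mul_pow]; norm_num
  -- now bound the whole expression
  have hub : (n.choose ℓ : ℝ) * (c * n * (ℓ.choose k : ℝ) / (n.choose k : ℝ)) ^ e
      ≤ (n:ℝ) ^ ℓ * (A * (n:ℝ) ^ ((1:ℝ) - k)) ^ e := by
    gcongr
    exact_mod_cast Nat.choose_le_pow n ℓ
  have hkey : (n:ℝ) ^ ℓ * (A * (n:ℝ) ^ ((1:ℝ) - k)) ^ e = A ^ e * (1 / (n:ℝ)) := by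
    rw [Real.mul_rpow hA0.le (Real.rpow_nonneg hnpos.le _), ← Real.rpow_natCast (n:ℝ) ℓ,
      ← Real.rpow_mul hnpos.le]
    have hexp : ((1:ℝ) - (k:ℝ)) * e = -((ℓ:ℝ) + 1) := by
      rw [he]
      field_simp
      ring
    rw [hexp]
    rw [show (n:ℝ) ^ (ℓ:ℝ) * (A ^ e * (n:ℝ) ^ (-((ℓ:ℝ)+1)))
        = A ^ e * ((n:ℝ) ^ (ℓ:ℝ) * (n:ℝ) ^ (-((ℓ:ℝ)+1))) from by ring,
      ← Real.rpow_add hnpos]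
    rw [show (ℓ:ℝ) + -((ℓ:ℝ)+1) = -1 from by ring, Real.rpow_neg_one, inv_eq_one_div]
  calc |(n.choose ℓ : ℝ) * (c * n * (ℓ.choose k : ℝ) / (n.choose k : ℝ)) ^ e|
      = (n.choose ℓ : ℝ) * (c * n * (ℓ.choose k : ℝ) / (n.choose k : ℝ)) ^ e := by
        rw [abs_of_nonneg]; positivity
    _ ≤ (n:ℝ) ^ ℓ * (A * (n:ℝ) ^ ((1:ℝ) - k)) ^ e := hub
    _ = A ^ e * (1 / (n:ℝ)) := hkey
    _ = A ^ e * |1 / (n:ℝ)| := by rw [abs_of_nonneg (by positivity)]
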